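/- arXiv:2112.12317 — 3 statements merged into one kernel-verified Lean document; each statement's English description precedes it below -/
import Mathlib

section
/- Fix κ > 2, ν ≥ 0, and consider the parametric family φ_θ(t) = σ² φ_{ν,κ}(t/β) for θ = (σ², β) ∈ [σ²_min, σ²_max] × [β_min, β_max] with 0 < σ²_min, 0 < β_min. Then the partial derivative ∂φ_θ/∂β exists for all t ≥ 0 and is given by ∂φ_θ/∂β(t) = (2 t² (κ−1) / β³) · (B(2(κ−1),ν+1)/B(2κ,ν+1)) · σ² φ_{ν,κ−1}(t/β), and it is uniformly bounded: |∂φ_θ/∂β(t)| ≤ (2(κ−1)/β_min) · (B(2(κ−1),ν+1)/B(2κ,ν+1)) · σ²_max for all t ≥ 0 and all θ in the parameter set, and it vanishes for t ≥ β. -/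
open scoped Real
open MeasureTheory Metric Filter
open scoped Topology

/-- The real Beta function, as an integral. -/
noncomputable def Beta (a b : ℝ) : ℝ :=
  ∫ t in (0:ℝ)..1, t ^ (a - 1) * (1 - t) ^ (b - 1)

/-- The generalized Wendland function with smoothness parameters ν and κ. -/
noncomputable def genWendland (ν κ : ℝ) (r : ℝ) : ℝ :=
  if r < 1 then
    (1 / Beta (2*κ) (ν + 1)) * ∫ u in r..1, u * (u^2 - r^2) ^ (κ - 1) * (1 - u) ^ ν
  else 0

private lemma cont_rpow_const {c : ℝ} (hc : 0 ≤ c) : Continuous fun x : ℝ => x ^ c := by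
  rw [continuous_iff_continuousAt]
  exact fun x => Real.continuousAt_rpow_const x c (Or.inr hc)

private lemma cont_integrand {c ν : ℝ} (hc : 0 ≤ c) (hν : 0 ≤ ν) (r : ℝ) :
    Continuous (fun u : ℝ => u * max (u^2 - r^2) 0 ^ c * (1-u) ^ ν) := by
  refine Continuous.mul (Continuous.mul continuous_id ?_) ?_
  · exact (cont_rpow_const hc).comp (((continuous_pow 2).sub continuous_const).max
      continuous_const)
  · exact (cont_rpow_const hν).comp (continuous_const.sub continuous_id)

private lemma maxpow_hasDerivAt {c : ℝ} (hc : 1 < c) (y : ℝ) :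
    HasDerivAt (fun z : ℝ => max z 0 ^ c) (c * max y 0 ^ (c - 1)) y := by
  rcases lt_trichotomy y 0 with h | h | h
  · have hval : c * max y 0 ^ (c - 1) = 0 := by
      rw [max_eq_right h.le, Real.zero_rpow (by intro h'; linarith : c - 1 ≠ 0), mul_zero]
    rw [hval]
    refine (hasDerivAt_const y (0:ℝ)).congr_of_eventuallyEq ?_
    filter_upwards [Iio_mem_nhds h] with z hz
    rw [max_eq_right (le_of_lt hz), Real.zero_rpow (by intro h'; linarith : c ≠ 0)]
  · subst h
    have hval : c * max (0:ℝ) 0 ^ (c - 1) = 0 := by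
      rw [max_self, Real.zero_rpow (by intro h'; linarith : c - 1 ≠ 0), mul_zero]
    rw [hval, hasDerivAt_iff_tendsto_slope]
    have hb : ∀ᶠ z in 𝓝[≠] (0:ℝ), ‖slope (fun z : ℝ => max z 0 ^ c) 0 z‖ ≤ |z| ^ (c - 1) := by
      filter_upwards [self_mem_nhdsWithin] with z hz
      have hz0 : z ≠ 0 := hz
      have hf0 : max (0:ℝ) 0 ^ c = 0 := by
        rw [max_self, Real.zero_rpow (by intro h'; linarith : c ≠ 0)]
      rcases lt_or_gt_of_ne hz0 with hneg | hpos
      · have : slope (fun z : ℝ => max z 0 ^ c) 0 z = 0 := by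
          rw [slope_def_field, hf0, max_eq_right hneg.le,
            Real.zero_rpow (by intro h'; linarith : c ≠ 0)]
          simp
        rw [this]
        simpa using Real.rpow_nonneg (abs_nonneg z) (c-1)
      · have : slope (fun z : ℝ => max z 0 ^ c) 0 z = z ^ (c - 1) := by
          rw [slope_def_field, hf0, max_eq_left hpos.le, sub_zero, sub_zero,
            Real.rpow_sub hpos, Real.rpow_one]
        rw [this, Real.norm_eq_abs, abs_of_nonneg (Real.rpow_nonneg hpos.le _),
          abs_of_pos hpos]
    refine squeeze_zero_norm' hb ?_
    have hcont : Continuous fun z : ℝ => |z| ^ (c - 1) :=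
      (cont_rpow_const (by linarith)).comp continuous_abs
    have := (hcont.tendsto 0).mono_left (nhdsWithin_le_nhds (s := {(0:ℝ)}ᶜ))
    simpa [Real.zero_rpow (by intro h'; linarith : c - 1 ≠ 0)] using this
  · rw [max_eq_left h.le]
    refine (Real.hasDerivAt_rpow_const (Or.inl (ne_of_gt h))).congr_of_eventuallyEq ?_
    filter_upwards [Ioi_mem_nhds h] with z hz
    rw [max_eq_left (le_of_lt hz)]

private lemma J_deriv (ν κ : ℝ) (hκ : 2 < κ) (hν : 0 ≤ ν) (r₀ : ℝ) :
    HasDerivAt (fun r : ℝ => ∫ u in (0:ℝ)..1, u * max (u^2 - r^2) 0 ^ (κ-1) * (1-u) ^ ν)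
      ((-2*r₀) * (κ-1) *
        ∫ u in (0:ℝ)..1, u * max (u^2 - r₀^2) 0 ^ (κ-1-1) * (1-u) ^ ν) r₀ := by
  have hκ1 : (1:ℝ) < κ - 1 := by linarith
  have hcF : ∀ r : ℝ, Continuous (fun u : ℝ => u * max (u^2 - r^2) 0 ^ (κ-1) * (1-u) ^ ν) :=
    fun r => cont_integrand (by linarith) hν r
  have hcF' : ∀ x : ℝ, Continuous
      (fun u : ℝ => u * ((κ-1) * max (u^2 - x^2) 0 ^ (κ-1-1) * (-2*x)) * (1-u) ^ ν) := by
    intro x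
    refine Continuous.mul (Continuous.mul continuous_id ?_) ?_
    · exact (continuous_const.mul ((cont_rpow_const (by linarith)).comp
        (((continuous_pow 2).sub continuous_const).max continuous_const))).mul
          continuous_const
    · exact (cont_rpow_const hν).comp (continuous_const.sub continuous_id)
  have key := intervalIntegral.hasDerivAt_integral_of_dominated_loc_of_deriv_le
    (μ := volume) (a := 0) (b := 1)
    (F := fun r u => u * max (u^2 - r^2) 0 ^ (κ-1) * (1-u) ^ ν)
    (F' := fun x u => u * ((κ-1) * max (u^2 - x^2) 0 ^ (κ-1-1) * (-2*x)) * (1-u) ^ ν)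
    (x₀ := r₀) (bound := fun _ => 2*(κ-1)*(|r₀|+1)) (s := ball r₀ 1) (ball_mem_nhds r₀ one_pos)
    (Eventually.of_forall fun x => (hcF x).aestronglyMeasurable)
    ((hcF r₀).intervalIntegrable 0 1)
    ((hcF' r₀).aestronglyMeasurable)
    ?_ (show IntervalIntegrable (fun _ : ℝ => 2*(κ-1)*(|r₀|+1)) volume 0 1 from
      continuous_const.intervalIntegrable 0 1) ?_
  · have heq : (∫ u in (0:ℝ)..1,
        u * ((κ-1) * max (u^2 - r₀^2) 0 ^ (κ-1-1) * (-2*r₀)) * (1-u) ^ ν)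
        = (-2*r₀) * (κ-1) *
          ∫ u in (0:ℝ)..1, u * max (u^2 - r₀^2) 0 ^ (κ-1-1) * (1-u) ^ ν := by
      rw [← intervalIntegral.integral_const_mul]
      apply intervalIntegral.integral_congr
      intro u _
      show u * ((κ-1) * max (u^2 - r₀^2) 0 ^ (κ-1-1) * (-2*r₀)) * (1-u) ^ ν
        = (-2*r₀) * (κ-1) * (u * max (u^2 - r₀^2) 0 ^ (κ-1-1) * (1-u) ^ ν)
      ring
    rw [← heq]
    exact key.2
  · -- bound
    refine ae_of_all _ fun u hu x hx => ?_
    rw [Set.uIoc_of_le (by norm_num : (0:ℝ) ≤ 1)] at hu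
    have hu0 : 0 < u := hu.1
    have hu1 : u ≤ 1 := hu.2
    have hxb : |x| ≤ |r₀| + 1 := by
      have := mem_ball_iff_norm.mp hx
      rw [Real.norm_eq_abs] at this
      calc |x| = |r₀ + (x - r₀)| := by ring_nf
        _ ≤ |r₀| + |x - r₀| := abs_add_le _ _
        _ ≤ |r₀| + 1 := by linarith
    have hM0 : (0:ℝ) ≤ max (u^2 - x^2) 0 ^ (κ-1-1) := Real.rpow_nonneg (le_max_right _ _) _
    have hM1 : max (u^2 - x^2) 0 ^ (κ-1-1) ≤ 1 := by
      apply Real.rpow_le_one (le_max_right _ _) (max_le (by nlinarith [sq_nonneg x]) zero_le_one)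
      linarith
    have hN0 : (0:ℝ) ≤ (1-u) ^ ν := Real.rpow_nonneg (by linarith) _
    have hN1 : (1-u) ^ ν ≤ 1 := Real.rpow_le_one (by linarith) (by linarith) hν
    have habs : ‖u * ((κ-1) * max (u^2 - x^2) 0 ^ (κ-1-1) * (-2*x)) * (1-u) ^ ν‖
        = u * ((κ-1) * max (u^2 - x^2) 0 ^ (κ-1-1) * (2*|x|)) * (1-u) ^ ν := by
      rw [Real.norm_eq_abs, abs_mul, abs_mul, abs_mul, abs_mul, abs_of_pos hu0,
        abs_of_nonneg hN0, abs_of_pos (by linarith : (0:ℝ) < κ - 1), abs_of_nonneg hM0]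
      congr 2
      rw [abs_mul]
      norm_num
    rw [habs]
    calc u * ((κ-1) * max (u^2 - x^2) 0 ^ (κ-1-1) * (2*|x|)) * (1-u) ^ ν
        ≤ 1 * ((κ-1) * 1 * (2*(|r₀|+1))) * 1 := by
          apply mul_le_mul _ hN1 hN0 _
          · apply mul_le_mul hu1 _ _ zero_le_one
            · apply mul_le_mul (mul_le_mul le_rfl hM1 hM0 (by linarith))
                (by linarith) (by positivity) (by nlinarith [abs_nonneg r₀])
            · positivity
          · positivity
      _ = 2*(κ-1)*(|r₀|+1) := by ring
  · -- differentiability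
    refine ae_of_all _ fun u _ x _ => ?_
    have h1 : HasDerivAt (fun y : ℝ => u^2 - y^2) (-2*x) x := by
      have := (hasDerivAt_pow 2 x).const_sub (u^2)
      refine this.congr_deriv ?_
      push_cast
      ring
    have h2 := (maxpow_hasDerivAt hκ1 (u^2 - x^2)).comp x h1
    have h3 : HasDerivAt (fun y : ℝ => max (u^2 - y^2) 0 ^ (κ-1))
        ((κ-1) * max (u^2 - x^2) 0 ^ (κ-1-1) * (-2*x)) x := h2
    exact (h3.const_mul u).mul_const ((1-u) ^ ν)

private lemma genWendland_eq (ν κ' : ℝ) (hκ' : 1 < κ') (hν : 0 ≤ ν) {r : ℝ} (hr : 0 ≤ r) :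
    genWendland ν κ' r
      = (1 / Beta (2*κ') (ν + 1)) *
        ∫ u in (0:ℝ)..1, u * max (u^2 - r^2) 0 ^ (κ'-1) * (1-u) ^ ν := by
  have hc : Continuous (fun u : ℝ => u * max (u^2 - r^2) 0 ^ (κ'-1) * (1-u) ^ ν) :=
    cont_integrand (by linarith) hν r
  rcases lt_or_ge r 1 with h1 | h1
  · rw [genWendland, if_pos h1]
    congr 1
    have hsplit := intervalIntegral.integral_add_adjacent_intervals
      (hc.intervalIntegrable (μ := MeasureTheory.volume) 0 r)
      (hc.intervalIntegrable (μ := MeasureTheory.volume) r 1)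
    rw [← hsplit]
    have hz : (∫ u in (0:ℝ)..r, u * max (u^2 - r^2) 0 ^ (κ'-1) * (1-u) ^ ν) = 0 := by
      rw [intervalIntegral.integral_congr (g := fun _ => (0:ℝ)) ?_,
        intervalIntegral.integral_zero]
      intro u hu
      rw [Set.uIcc_of_le hr] at hu
      have : u^2 - r^2 ≤ 0 := by nlinarith [hu.1, hu.2]
      show u * max (u^2 - r^2) 0 ^ (κ'-1) * (1-u) ^ ν = 0
      rw [max_eq_right this, Real.zero_rpow (by intro h'; linarith : κ' - 1 ≠ 0),
        mul_zero, zero_mul]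
    rw [hz, zero_add]
    apply intervalIntegral.integral_congr
    intro u hu
    rw [Set.uIcc_of_le h1.le] at hu
    have : 0 ≤ u^2 - r^2 := by nlinarith [hu.1, hu.2]
    show u * (u^2 - r^2) ^ (κ'-1) * (1-u) ^ ν
      = u * max (u^2 - r^2) 0 ^ (κ'-1) * (1-u) ^ ν
    rw [max_eq_left this]
  · rw [genWendland, if_neg (not_lt.mpr h1)]
    have hz : (∫ u in (0:ℝ)..1, u * max (u^2 - r^2) 0 ^ (κ'-1) * (1-u) ^ ν) = 0 := by
      rw [intervalIntegral.integral_congr (g := fun _ => (0:ℝ)) ?_,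
        intervalIntegral.integral_zero]
      intro u hu
      rw [Set.uIcc_of_le (by norm_num : (0:ℝ) ≤ 1)] at hu
      have : u^2 - r^2 ≤ 0 := by nlinarith [hu.1, hu.2]
      show u * max (u^2 - r^2) 0 ^ (κ'-1) * (1-u) ^ ν = 0
      rw [max_eq_right this, Real.zero_rpow (by intro h'; linarith : κ' - 1 ≠ 0),
        mul_zero, zero_mul]
    rw [hz, mul_zero]

private lemma Beta_pos {a b : ℝ} (ha : 1 ≤ a) (hb : 1 ≤ b) : 0 < Beta a b := by
  rw [Beta]
  apply intervalIntegral.intervalIntegral_pos_of_pos_on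
  · exact ((cont_rpow_const (by linarith)).mul
      ((cont_rpow_const (by linarith)).comp
        (continuous_const.sub continuous_id))).intervalIntegrable 0 1
  · intro x hx
    exact mul_pos (Real.rpow_pos_of_pos hx.1 _) (Real.rpow_pos_of_pos (by linarith [hx.2]) _)
  · norm_num

private lemma genWendland_mem (ν κ' : ℝ) (hκ' : 1 < κ') (hν : 0 ≤ ν) {r : ℝ} (hr : 0 ≤ r) :
    0 ≤ genWendland ν κ' r ∧ genWendland ν κ' r ≤ 1 := by
  have hB : 0 < Beta (2*κ') (ν+1) := Beta_pos (by linarith) (by linarith)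
  rw [genWendland_eq ν κ' hκ' hν hr]
  have hJnn : 0 ≤ ∫ u in (0:ℝ)..1, u * max (u^2 - r^2) 0 ^ (κ'-1) * (1-u) ^ ν := by
    apply intervalIntegral.integral_nonneg (by norm_num)
    intro u hu
    exact mul_nonneg (mul_nonneg hu.1 (Real.rpow_nonneg (le_max_right _ _) _))
      (Real.rpow_nonneg (by linarith [hu.2]) _)
  have hJle : (∫ u in (0:ℝ)..1, u * max (u^2 - r^2) 0 ^ (κ'-1) * (1-u) ^ ν)
      ≤ Beta (2*κ') (ν+1) := by
    have hBeta_eq : Beta (2*κ') (ν+1)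
        = ∫ u in (0:ℝ)..1, u ^ (2*κ'-1) * (1-u) ^ ν := by
      rw [Beta]
      simp only [add_sub_cancel_right]
    rw [hBeta_eq]
    apply intervalIntegral.integral_mono_on (by norm_num)
      ((cont_integrand (by linarith : (0:ℝ) ≤ κ'-1) hν r).intervalIntegrable 0 1)
      (((cont_rpow_const (by linarith)).mul
        ((cont_rpow_const hν).comp (continuous_const.sub continuous_id))).intervalIntegrable 0 1)
    intro u hu
    have h2 : max (u^2 - r^2) 0 ^ (κ'-1) ≤ (u^2) ^ (κ'-1) :=
      Real.rpow_le_rpow (le_max_right _ _)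
        (max_le (by nlinarith [sq_nonneg r]) (sq_nonneg u)) (by linarith)
    have h3 : u * (u^2 : ℝ) ^ (κ'-1) = u ^ (2*κ'-1) := by
      rw [show (2:ℝ)*κ'-1 = 1 + (2*κ'-2) by ring,
        Real.rpow_add' hu.1 (by intro h'; linarith : (1:ℝ) + (2*κ'-2) ≠ 0), Real.rpow_one]
      congr 1
      rw [← Real.rpow_natCast u 2, ← Real.rpow_mul hu.1]
      norm_num
      ring_nf
    calc u * max (u^2 - r^2) 0 ^ (κ'-1) * (1-u) ^ ν
        ≤ u * (u^2) ^ (κ'-1) * (1-u) ^ ν := by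
          apply mul_le_mul_of_nonneg_right (mul_le_mul_of_nonneg_left h2 hu.1)
            (Real.rpow_nonneg (by linarith [hu.2]) _)
      _ = u ^ (2*κ'-1) * (1-u) ^ ν := by rw [h3]
  constructor
  · exact mul_nonneg (by positivity) hJnn
  · rw [one_div, inv_mul_le_iff₀ hB, mul_one]
    exact hJle

/-- For κ > 2, the family `φ_θ(t) = σ² φ_{ν,κ}(t/β)` is differentiable in
the range parameter β, with derivative
`(2t²(κ-1)/β³)(B(2(κ-1),ν+1)/B(2κ,ν+1)) σ² φ_{ν,κ-1}(t/β)`, which is uniformly bounded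
over the parameter set and vanishes for `t ≥ β`. -/
theorem genWendland_deriv_beta (ν κ : ℝ) (hκ : 2 < κ) (hν : 0 ≤ ν)
    (σmin σmax βmin βmax : ℝ)
    (hσmin : 0 < σmin) (hσ : σmin ≤ σmax) (hβmin : 0 < βmin) (hβ : βmin ≤ βmax)
    (t σ2 β : ℝ) (ht : 0 ≤ t)
    (hσ2 : σ2 ∈ Set.Icc σmin σmax) (hβm : β ∈ Set.Icc βmin βmax) :
    HasDerivAt (fun b => σ2 * genWendland ν κ (t / b))
      ((2 * t^2 * (κ - 1) / β^3) * (Beta (2*(κ-1)) (ν + 1) / Beta (2*κ) (ν + 1)) *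
        σ2 * genWendland ν (κ - 1) (t / β)) β ∧
    |(2 * t^2 * (κ - 1) / β^3) * (Beta (2*(κ-1)) (ν + 1) / Beta (2*κ) (ν + 1)) *
        σ2 * genWendland ν (κ - 1) (t / β)| ≤
      (2 * (κ - 1) / βmin) * (Beta (2*(κ-1)) (ν + 1) / Beta (2*κ) (ν + 1)) * σmax ∧
    (β ≤ t →
      (2 * t^2 * (κ - 1) / β^3) * (Beta (2*(κ-1)) (ν + 1) / Beta (2*κ) (ν + 1)) *
        σ2 * genWendland ν (κ - 1) (t / β) = 0) := by
  have hβ0 : 0 < β := lt_of_lt_of_le hβmin hβm.1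
  have hσ2pos : 0 < σ2 := lt_of_lt_of_le hσmin hσ2.1
  have hB₁ : 0 < Beta (2*(κ-1)) (ν + 1) := Beta_pos (by linarith) (by linarith)
  have hB₂ : 0 < Beta (2*κ) (ν + 1) := Beta_pos (by linarith) (by linarith)
  have hW := genWendland_mem ν (κ-1) (by linarith) hν (div_nonneg ht hβ0.le)
  have hWzero : β ≤ t → genWendland ν (κ-1) (t/β) = 0 := by
    intro hbt
    rw [genWendland, if_neg (not_lt.mpr ((one_le_div hβ0).mpr hbt))]
  refine ⟨?_, ?_, fun hbt => by rw [hWzero hbt, mul_zero]⟩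
  · -- derivative
    rcases eq_or_lt_of_le ht with ht0 | ht0
    · have hfun : (fun b : ℝ => σ2 * genWendland ν κ (t / b))
          = fun _ => σ2 * genWendland ν κ 0 := by
        funext b
        rw [← ht0, zero_div]
      have hval : (2 * t^2 * (κ - 1) / β^3) *
          (Beta (2*(κ-1)) (ν + 1) / Beta (2*κ) (ν + 1)) *
          σ2 * genWendland ν (κ - 1) (t / β) = 0 := by
        rw [← ht0]
        norm_num
      rw [hfun, hval]
      exact hasDerivAt_const β _
    · have hJd := J_deriv ν κ hκ hν (t/β)
      have hinv : HasDerivAt (fun b : ℝ => t / b) (-t/β^2) β := by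
        have h := (hasDerivAt_inv (ne_of_gt hβ0)).const_mul t
        have : (fun b : ℝ => t * b⁻¹) = fun b : ℝ => t / b := by
          funext b; rw [div_eq_mul_inv]
        rw [this] at h
        refine h.congr_deriv ?_
        ring
      have hcomp := HasDerivAt.comp β hJd hinv
      have hcomp2 := hcomp.const_mul (σ2 * (1 / Beta (2*κ) (ν + 1)))
      have hev : (fun b => σ2 * genWendland ν κ (t / b)) =ᶠ[nhds β]
          (fun b => σ2 * (1 / Beta (2*κ) (ν + 1)) *
            ((fun r : ℝ => ∫ u in (0:ℝ)..1, u * max (u^2 - r^2) 0 ^ (κ-1) * (1-u) ^ ν)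
              ∘ fun b : ℝ => t / b) b) := by
        filter_upwards [Ioi_mem_nhds hβ0] with b hb
        rw [genWendland_eq ν κ (by linarith) hν (div_nonneg ht (le_of_lt hb))]
        simp only [Function.comp]
        ring
      have hvl : (2 * t^2 * (κ - 1) / β^3) *
          (Beta (2*(κ-1)) (ν + 1) / Beta (2*κ) (ν + 1)) *
          σ2 * genWendland ν (κ - 1) (t / β)
          = σ2 * (1 / Beta (2*κ) (ν + 1)) *
            ((-2*(t/β)) * (κ-1) *
              (∫ u in (0:ℝ)..1, u * max (u^2 - (t/β)^2) 0 ^ (κ-1-1) * (1-u) ^ ν)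
              * (-t/β^2)) := by
        rw [genWendland_eq ν (κ-1) (by linarith) hν (div_nonneg ht hβ0.le)]
        have hexp : κ - 1 - 1 = κ - 1 - 1 := rfl
        field_simp
      rw [hvl]
      exact hcomp2.congr_of_eventuallyEq hev
  · -- bound
    have hR : 0 < Beta (2*(κ-1)) (ν + 1) / Beta (2*κ) (ν + 1) := div_pos hB₁ hB₂
    have h0 : 0 ≤ 2 * t^2 * (κ - 1) / β^3 :=
      div_nonneg (by nlinarith [sq_nonneg t]) (pow_pos hβ0 3).le
    have hE : 0 ≤ (2 * t^2 * (κ - 1) / β^3) *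
        (Beta (2*(κ-1)) (ν + 1) / Beta (2*κ) (ν + 1)) * σ2 *
        genWendland ν (κ - 1) (t / β) :=
      mul_nonneg (mul_nonneg (mul_nonneg h0 hR.le) hσ2pos.le) hW.1
    rw [abs_of_nonneg hE]
    have key : t^2/β^3 * genWendland ν (κ - 1) (t / β) ≤ 1/βmin := by
      rcases le_total t β with hc | hc
      · have ht2 : t^2/β^3 ≤ 1/β := by
          rw [div_le_div_iff₀ (pow_pos hβ0 3) hβ0]
          nlinarith [mul_nonneg (mul_nonneg hβ0.le (sub_nonneg.mpr hc))
            (by linarith : (0:ℝ) ≤ β + t)]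
        have h1β : (1:ℝ)/β ≤ 1/βmin := one_div_le_one_div_of_le hβmin hβm.1
        calc t^2/β^3 * genWendland ν (κ - 1) (t / β) ≤ (1/βmin) * 1 :=
              mul_le_mul (le_trans ht2 h1β) hW.2 hW.1 (by positivity)
          _ = 1/βmin := mul_one _
      · rw [hWzero hc, mul_zero]
        positivity
    have hA : 0 ≤ 2*(κ-1) * (Beta (2*(κ-1)) (ν + 1) / Beta (2*κ) (ν + 1)) :=
      mul_nonneg (by linarith) hR.le
    calc (2 * t^2 * (κ - 1) / β^3) *
          (Beta (2*(κ-1)) (ν + 1) / Beta (2*κ) (ν + 1)) * σ2 *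
          genWendland ν (κ - 1) (t / β)
        = (2*(κ-1) * (Beta (2*(κ-1)) (ν + 1) / Beta (2*κ) (ν + 1)) * σ2) *
          (t^2/β^3 * genWendland ν (κ - 1) (t / β)) := by ring
      _ ≤ (2*(κ-1) * (Beta (2*(κ-1)) (ν + 1) / Beta (2*κ) (ν + 1)) * σmax) * (1/βmin) := by
          apply mul_le_mul (mul_le_mul_of_nonneg_left hσ2.2 hA) key
            (mul_nonneg (div_nonneg (sq_nonneg t) (pow_pos hβ0 3).le) hW.1)
            (mul_nonneg hA (by linarith))
      _ = (2 * (κ - 1) / βmin) * (Beta (2*(κ-1)) (ν + 1) / Beta (2*κ) (ν + 1)) * σmax := by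
          ring
end

section
/- Let φ : [0, M] → ℝ be continuous and extend it by 0 to [0,∞) (assuming φ(M) = 0). For m ∈ ℕ let b_m → ∞ with b_m = o(m), and define the Chlodovsky–Bernstein approximation B_m(t) = ∑_{k=0}^m φ(b_m k/m · 𝟙[b_m k/m ≤ M]) · C(m,k) (t/b_m)^k (1 − t/b_m)^{m−k} for t ∈ [0, M] (with φ evaluated as 0 outside [0,M]), and B_m(t) = 0 for t > M. Then sup_{t ≥ 0} |B_m(t) − φ(t)| → 0 as m → ∞. -/
open Filter
open scoped BigOperators

lemma bern_sum (m : ℕ) (x : ℝ) :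
    ∑ k ∈ Finset.range (m + 1), (m.choose k : ℝ) * x ^ k * (1 - x) ^ (m - k) = 1 := by
  calc ∑ k ∈ Finset.range (m + 1), (m.choose k : ℝ) * x ^ k * (1 - x) ^ (m - k)
      = ∑ k ∈ Finset.range (m + 1), x ^ k * (1 - x) ^ (m - k) * (m.choose k : ℝ) :=
        Finset.sum_congr rfl (fun k _ => by ring)
    _ = (x + (1 - x)) ^ m := (add_pow x (1 - x) m).symm
    _ = 1 := by norm_num

lemma bern_var {m : ℕ} (hm : 0 < m) {x : ℝ} (hx0 : 0 ≤ x) (hx1 : x ≤ 1) :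
    ∑ k ∈ Finset.range (m + 1),
        (x - (k : ℝ) / m) ^ 2 * ((m.choose k : ℝ) * x ^ k * (1 - x) ^ (m - k))
      = x * (1 - x) / m := by
  have h := bernstein.variance (n := m) (by exact_mod_cast hm.ne') ⟨x, hx0, hx1⟩
  simpa [Finset.sum_range, bernstein.z, bernstein_apply] using h

/-- The trimmed Chlodovsky–Bernstein polynomial of `φ` on `[0, b]`, set to 0 beyond `M`. -/
noncomputable def chlodovsky (φ : ℝ → ℝ) (M b : ℝ) (m : ℕ) (t : ℝ) : ℝ :=
  if t ≤ M then
    ∑ k ∈ Finset.range (m + 1),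
      φ (b * k / m) * (m.choose k) * (t / b) ^ k * (1 - t / b) ^ (m - k)
  else 0

/-- Trimmed Chlodovsky–Bernstein polynomials of a continuous function
vanishing at and beyond `M` converge uniformly on `[0,∞)`, provided `b_m → ∞` and
`b_m = o(m)`. -/
theorem chlodovsky_uniform_convergence (M : ℝ) (hM : 0 < M) (φ : ℝ → ℝ)
    (hcont : ContinuousOn φ (Set.Icc 0 M)) (hφM : φ M = 0)
    (hout : ∀ t, t ∉ Set.Icc (0:ℝ) M → φ t = 0)
    (b : ℕ → ℝ) (hbpos : ∀ m, 0 < b m)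
    (hb : Tendsto b atTop atTop)
    (hbo : Tendsto (fun m => b m / m) atTop (nhds 0)) :
    ∀ ε > 0, ∃ N : ℕ, ∀ m ≥ N, ∀ t : ℝ, 0 ≤ t →
      |chlodovsky φ M (b m) m t - φ t| ≤ ε := by
  intro ε hε
  -- bound K on |φ|
  obtain ⟨K0, hK0⟩ := isCompact_Icc.exists_bound_of_continuousOn hcont
  set K : ℝ := |K0| + 1 with hKdef
  have hKpos : 0 < K := by positivity
  have hK : ∀ t : ℝ, |φ t| ≤ K := by
    intro t
    by_cases h : t ∈ Set.Icc (0:ℝ) M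
    · have := hK0 t h
      rw [Real.norm_eq_abs] at this
      have h2 := le_abs_self K0
      simp only [hKdef]; linarith
    · rw [hout t h]; simp; positivity
  -- uniform continuity on [0, M]
  have hUC := (isCompact_Icc (a := (0:ℝ)) (b := M)).uniformContinuousOn_of_continuous hcont
  rw [Metric.uniformContinuousOn_iff] at hUC
  obtain ⟨δ, hδ, hδ'⟩ := hUC (ε/2) (by linarith)
  -- global uniform continuity on [0, ∞)
  have hglob : ∀ s t : ℝ, 0 ≤ s → 0 ≤ t → |s - t| < δ → |φ s - φ t| ≤ ε/2 := by
    have keyg : ∀ s t : ℝ, 0 ≤ s → 0 ≤ t → s ≤ M → |s - t| < δ → |φ s - φ t| ≤ ε/2 := by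
      intro s t hs ht hsM hst
      rw [abs_sub_lt_iff] at hst
      by_cases htM : t ≤ M
      · have := hδ' s ⟨hs, hsM⟩ t ⟨ht, htM⟩
          (by rw [Real.dist_eq, abs_sub_lt_iff]; exact hst)
        rw [Real.dist_eq] at this; linarith
      · push_neg at htM
        have ht0 : φ t = 0 := hout t (by simp [Set.mem_Icc]; intro; linarith)
        have := hδ' s ⟨hs, hsM⟩ M ⟨hM.le, le_refl M⟩
          (by rw [Real.dist_eq, abs_sub_lt_iff]; constructor <;> linarith)
        rw [Real.dist_eq, hφM] at this
        rw [ht0]; linarith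
    intro s t hs ht hst
    by_cases hsM : s ≤ M
    · exact keyg s t hs ht hsM hst
    · by_cases htM : t ≤ M
      · rw [abs_sub_comm] at hst ⊢
        exact keyg t s ht hs htM hst
      · push_neg at hsM htM
        rw [hout s (by simp [Set.mem_Icc]; intro; linarith),
            hout t (by simp [Set.mem_Icc]; intro; linarith)]
        simp; linarith
  -- choose N
  have h1 : ∀ᶠ m in atTop, M + 1 ≤ b m := hb.eventually_ge_atTop (M + 1)
  set c : ℝ := ε/2 * δ^2 / (2*K*M) with hc
  have hcpos : 0 < c := by positivity
  have h2 : ∀ᶠ m in atTop, b m / m < c := hbo.eventually (gt_mem_nhds hcpos)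
  have h3 : ∀ᶠ m : ℕ in atTop, 1 ≤ m := eventually_ge_atTop 1
  obtain ⟨N, hN⟩ := eventually_atTop.mp ((h1.and h2).and h3)
  refine ⟨N, fun m hm t ht => ?_⟩
  obtain ⟨⟨hbm, hbm2⟩, hm1⟩ := hN m hm
  by_cases htM : t ≤ M
  swap
  · rw [chlodovsky, if_neg htM, hout t (by simp [Set.mem_Icc]; intro; push_neg at htM; linarith)]
    simp; linarith
  -- main case: 0 ≤ t ≤ M
  have hbp : 0 < b m := hbpos m
  have hbM : M < b m := by linarith
  have hm0 : (0:ℝ) < m := by exact_mod_cast hm1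
  rw [chlodovsky, if_pos htM]
  set x : ℝ := t / b m with hx
  have hx0 : 0 ≤ x := div_nonneg ht hbp.le
  have hx1 : x ≤ 1 := by rw [hx, div_le_one hbp]; linarith
  have h1x : 0 ≤ 1 - x := by linarith
  have htx : t = b m * x := by rw [hx, mul_div_cancel₀ _ (ne_of_gt hbp)]
  set w : ℕ → ℝ := fun k => (m.choose k : ℝ) * x ^ k * (1 - x) ^ (m - k) with hw
  have hw0 : ∀ k, 0 ≤ w k := fun k => by
    simp only [hw]; positivity
  have hsum1 : ∑ k ∈ Finset.range (m + 1), w k = 1 := bern_sum m x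
  set s : ℕ → ℝ := fun k => b m * k / m with hs
  have key : (∑ k ∈ Finset.range (m + 1),
      φ (b m * k / m) * (m.choose k) * x ^ k * (1 - x) ^ (m - k)) - φ t
      = ∑ k ∈ Finset.range (m + 1), (φ (s k) - φ t) * w k := by
    have e1 : ∑ k ∈ Finset.range (m + 1), (φ (s k) - φ t) * w k
        = (∑ k ∈ Finset.range (m + 1), φ (s k) * w k)
          - φ t * ∑ k ∈ Finset.range (m + 1), w k := by
      rw [Finset.mul_sum, ← Finset.sum_sub_distrib]
      exact Finset.sum_congr rfl fun k _ => by ring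
    rw [e1, hsum1, mul_one]
    congr 1
    exact Finset.sum_congr rfl fun k _ => by simp only [hw, hs]; ring
  rw [key]
  have hpoint : ∀ k ∈ Finset.range (m + 1),
      |φ (s k) - φ t| ≤ ε/2 + (2*K/δ^2) * (s k - t)^2 := by
    intro k _
    have hsk : 0 ≤ s k := by
      simp only [hs]; positivity
    by_cases hnear : |s k - t| < δ
    · have h := hglob (s k) t hsk ht hnear
      have h2 : 0 ≤ (2*K/δ^2) * (s k - t)^2 := by positivity
      linarith
    · push_neg at hnear
      have h2K : |φ (s k) - φ t| ≤ 2*K := by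
        have := hK (s k); have := hK t
        have habs : |φ (s k) - φ t| ≤ |φ (s k)| + |φ t| := abs_sub _ _
        linarith
      have hδ2 : δ^2 ≤ (s k - t)^2 := by
        calc δ^2 ≤ |s k - t|^2 := by gcongr
          _ = (s k - t)^2 := sq_abs _
      have hq : 2*K ≤ (2*K/δ^2) * (s k - t)^2 := by
        rw [div_mul_eq_mul_div, le_div_iff₀ (by positivity)]
        nlinarith
      linarith
  calc |∑ k ∈ Finset.range (m + 1), (φ (s k) - φ t) * w k|
      ≤ ∑ k ∈ Finset.range (m + 1), |(φ (s k) - φ t) * w k| :=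
        Finset.abs_sum_le_sum_abs _ _
    _ = ∑ k ∈ Finset.range (m + 1), |φ (s k) - φ t| * w k :=
        Finset.sum_congr rfl fun k _ => by rw [abs_mul, abs_of_nonneg (hw0 k)]
    _ ≤ ∑ k ∈ Finset.range (m + 1), (ε/2 + (2*K/δ^2) * (s k - t)^2) * w k :=
        Finset.sum_le_sum fun k hk => mul_le_mul_of_nonneg_right (hpoint k hk) (hw0 k)
    _ = ε/2 * (∑ k ∈ Finset.range (m + 1), w k)
        + (2*K/δ^2) * ((b m)^2 * ∑ k ∈ Finset.range (m + 1), (x - (k:ℝ)/m)^2 * w k) := by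
        rw [Finset.mul_sum, Finset.mul_sum, Finset.mul_sum, ← Finset.sum_add_distrib]
        refine Finset.sum_congr rfl fun k _ => ?_
        have hst : s k - t = b m * ((k:ℝ)/m - x) := by
          simp only [hs]; rw [htx]; ring
        rw [hst]; ring
    _ = ε/2 + (2*K/δ^2) * ((b m)^2 * (x*(1-x)/m)) := by
        rw [hsum1, mul_one]
        simp only [hw]
        rw [bern_var hm1 hx0 hx1]
    _ ≤ ε/2 + ε/2 := by
        have hC : (0:ℝ) ≤ 2*K/δ^2 := by positivity
        have e1 : (b m)^2 * (x/(m:ℝ)) = t * (b m / m) := by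
          rw [hx]; field_simp
        have e2 : (b m)^2 * (x*(1-x)/m) ≤ (b m)^2 * (x/(m:ℝ)) := by
          gcongr
          nlinarith
        have e3 : t * (b m / m) ≤ M * c := by
          apply mul_le_mul htM hbm2.le (by positivity) hM.le
        have e4 : (b m)^2 * (x*(1-x)/m) ≤ M * c := by
          rw [e1] at e2; linarith
        have h5 : (2*K/δ^2) * ((b m)^2 * (x*(1-x)/m)) ≤ (2*K/δ^2) * (M*c) :=
          mul_le_mul_of_nonneg_left e4 hC
        have heq : (2*K/δ^2) * (M*c) = ε/2 := by
          rw [hc]; field_simp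
        linarith
    _ = ε := by ring
end

section
/- Let Σ and Σ̃ be real symmetric positive-definite n × n matrices and K a real symmetric positive-semidefinite n × n matrix, with ‖K‖₂ ≤ M, λ_min(Σ), λ_min(Σ̃) ≥ m > 0, and ‖Σ‖₂, ‖Σ̃‖₂ ≤ M. Define the scaled Kullback–Leibler-type functional d(Σ) = (1/n) log det(Σ K⁻¹) + (1/n) tr(K Σ⁻¹) − 1 (K additionally assumed positive definite with λ_min(K) ≥ m). Then |d(Σ) − d(Σ̃)| ≤ C(m, M) · ‖Σ − Σ̃‖₂ for a constant C(m,M) depending only on m and M, not on n. -/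
set_option synthInstance.maxHeartbeats 1000000
set_option maxHeartbeats 1000000

/-- Spectral (operator 2-)norm of a real square matrix. -/
noncomputable def specNorm {n : ℕ} (A : Matrix (Fin n) (Fin n) ℝ) : ℝ :=
  ‖Matrix.toEuclideanCLM (𝕜 := ℝ) A‖

open scoped Matrix.Norms.L2Operator RealInnerProductSpace Matrix MatrixOrder

namespace KLaux

variable {n : ℕ}

lemma specNorm_eq (A : Matrix (Fin n) (Fin n) ℝ) : specNorm A = ‖A‖ := rfl

lemma entry_abs_le (A : Matrix (Fin n) (Fin n) ℝ) (i j : Fin n) :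
    |A i j| ≤ ‖A‖ := by
  classical
  set e : EuclideanSpace ℝ (Fin n) := EuclideanSpace.single j (1:ℝ) with he
  set v : EuclideanSpace ℝ (Fin n) := Matrix.toEuclideanCLM (𝕜 := ℝ) A e with hv
  have hvi : v i = A i j := by
    have : e = (WithLp.equiv 2 (Fin n → ℝ)).symm (Pi.single j 1) := by
      rw [he]; rfl
    rw [hv, this]
    simp [Matrix.toLin'_apply, Matrix.mulVec_single]
  have h1 : v i = ⟪EuclideanSpace.single i (1:ℝ), v⟫ := by
    rw [EuclideanSpace.inner_single_left]; simp
  have h2 : |A i j| ≤ ‖v‖ := by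
    rw [← hvi, h1]
    calc |⟪EuclideanSpace.single i (1:ℝ), v⟫| ≤ ‖EuclideanSpace.single i (1:ℝ)‖ * ‖v‖ :=
          abs_real_inner_le_norm _ _
      _ = ‖v‖ := by rw [EuclideanSpace.norm_single]; simp
  refine h2.trans ?_
  calc ‖v‖ ≤ ‖Matrix.toEuclideanCLM (𝕜 := ℝ) A‖ * ‖e‖ :=
        (Matrix.toEuclideanCLM (𝕜 := ℝ) A).le_opNorm e
    _ = ‖A‖ := by rw [he, EuclideanSpace.norm_single]; simp [Matrix.cstar_norm_def]

lemma abs_trace_le (A : Matrix (Fin n) (Fin n) ℝ) :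
    |A.trace| ≤ (n : ℝ) * ‖A‖ := by
  classical
  calc |A.trace| = |∑ i, A i i| := by rw [Matrix.trace]; rfl
    _ ≤ ∑ i : Fin n, |A i i| := Finset.abs_sum_le_sum_abs _ _
    _ ≤ ∑ _i : Fin n, ‖A‖ := Finset.sum_le_sum fun i _ => entry_abs_le A i i
    _ = (n : ℝ) * ‖A‖ := by simp [mul_comm]

/-- If all eigenvalues of a PD real matrix are `≥ m`, then `S - m•1` is PSD. -/
lemma sub_smul_one_posSemidef {S : Matrix (Fin n) (Fin n) ℝ} (hS : S.PosDef) {m : ℝ}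
    (hme : ∀ i, m ≤ hS.1.eigenvalues i) : (S - m • 1).PosSemidef := by
  classical
  have hH := hS.1
  set U : Matrix (Fin n) (Fin n) ℝ :=
    (Matrix.IsHermitian.eigenvectorUnitary hH : Matrix (Fin n) (Fin n) ℝ) with hU
  have hUU : U * star U = 1 :=
    Matrix.mem_unitaryGroup_iff.mp (Matrix.IsHermitian.eigenvectorUnitary hH).2
  have hspec : S = U * Matrix.diagonal (RCLike.ofReal ∘ hH.eigenvalues) * star U :=
    Matrix.IsHermitian.spectral_theorem hH
  have key : S - m • 1 = U * Matrix.diagonal (fun i => hH.eigenvalues i - m) * star U := by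
    have h1 : (m • 1 : Matrix (Fin n) (Fin n) ℝ) = U * (m • 1) * star U := by
      rw [Matrix.mul_smul, Matrix.smul_mul, Matrix.mul_one, hUU]
    have step : S - m • 1 = U * Matrix.diagonal (RCLike.ofReal ∘ hH.eigenvalues) * star U
        - U * (m • 1) * star U := by rw [← hspec, ← h1]
    rw [step]
    have : (Matrix.diagonal (RCLike.ofReal ∘ hH.eigenvalues) : Matrix (Fin n) (Fin n) ℝ)
        - m • 1 = Matrix.diagonal (fun i => hH.eigenvalues i - m) := by
      ext i j
      by_cases hij : i = j <;> simp [Matrix.diagonal, Matrix.one_apply, hij]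
    rw [← this]
    noncomm_ring
  rw [key]
  have hdiag : (Matrix.diagonal (fun i => hH.eigenvalues i - m)).PosSemidef :=
    Matrix.posSemidef_diagonal_iff.mpr fun i => sub_nonneg.mpr (hme i)
  have := hdiag.mul_mul_conjTranspose_same U
  simpa [Matrix.star_eq_conjTranspose] using this

/-- quadratic lower bound in dot-product form -/
lemma quad_lower {S : Matrix (Fin n) (Fin n) ℝ} (hS : S.PosDef) {m : ℝ}
    (hme : ∀ i, m ≤ hS.1.eigenvalues i) (x : Fin n → ℝ) :
    m * (x ⬝ᵥ x) ≤ x ⬝ᵥ (S *ᵥ x) := by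
  have h := (sub_smul_one_posSemidef hS hme).dotProduct_mulVec_nonneg x
  simp only [star_trivial, RCLike.re_to_real] at h
  have : x ⬝ᵥ ((S - m • 1) *ᵥ x) = x ⬝ᵥ (S *ᵥ x) - m * (x ⬝ᵥ x) := by
    rw [Matrix.sub_mulVec, dotProduct_sub]
    congr 1
    rw [Matrix.smul_mulVec, Matrix.one_mulVec, dotProduct_smul]
    rfl
  rw [this] at h
  linarith

/-- norm bound for the inverse -/
lemma inv_norm_le {S : Matrix (Fin n) (Fin n) ℝ} (hS : S.PosDef) {m : ℝ} (hm : 0 < m)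
    (hq : ∀ x : Fin n → ℝ, m * (x ⬝ᵥ x) ≤ x ⬝ᵥ (S *ᵥ x)) :
    ‖S⁻¹‖ ≤ 1 / m := by
  have hdet : IsUnit S.det := isUnit_iff_ne_zero.mpr (ne_of_gt hS.det_pos)
  have hSS : S * S⁻¹ = 1 := Matrix.mul_nonsing_inv S hdet
  rw [Matrix.cstar_norm_def]
  refine ContinuousLinearMap.opNorm_le_bound _ (by positivity) fun x => ?_
  set y : EuclideanSpace ℝ (Fin n) := Matrix.toEuclideanCLM (𝕜 := ℝ) S⁻¹ x with hy
  have hTy : Matrix.toEuclideanCLM (𝕜 := ℝ) S y = x := by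
    rw [hy, ← ContinuousLinearMap.mul_apply, ← map_mul, hSS, map_one,
      ContinuousLinearMap.one_apply]
  have hinner : ⟪y, Matrix.toEuclideanCLM (𝕜 := ℝ) S y⟫
      = (WithLp.equiv 2 _ y) ⬝ᵥ (S *ᵥ (WithLp.equiv 2 _ y)) := by
    rw [EuclideanSpace.inner_eq_star_dotProduct]
    simp [Matrix.ofLp_toEuclideanCLM, Matrix.toLin'_apply, dotProduct_comm]
  have hself : ⟪y, y⟫ = (WithLp.equiv 2 _ y) ⬝ᵥ (WithLp.equiv 2 _ y) := by
    rw [EuclideanSpace.inner_eq_star_dotProduct]; simp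
  have h1 : m * ‖y‖ ^ 2 ≤ ⟪y, x⟫ := by
    have := hq (WithLp.equiv 2 _ y)
    rw [← hinner, hTy] at this
    calc m * ‖y‖ ^ 2 = m * ⟪y, y⟫ := by rw [real_inner_self_eq_norm_sq]
      _ ≤ ⟪y, x⟫ := by rw [hself]; exact this
  have h2 : ⟪y, x⟫ ≤ ‖y‖ * ‖x‖ := real_inner_le_norm y x
  have hyx : m * ‖y‖ ^ 2 ≤ ‖y‖ * ‖x‖ := h1.trans h2
  by_cases hy0 : ‖y‖ = 0
  · rw [hy0]; positivity
  · have hypos : 0 < ‖y‖ := lt_of_le_of_ne (norm_nonneg _) (Ne.symm hy0)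
    rw [div_mul_eq_mul_div, le_div_iff₀ hm]
    nlinarith

lemma trace_eq_sum_eigenvalues {A : Matrix (Fin n) (Fin n) ℝ} (hA : A.IsHermitian) :
    A.trace = ∑ i, hA.eigenvalues i := by
  classical
  exact_mod_cast hA.trace_eq_sum_eigenvalues

lemma log_det_le_trace_sub {P : Matrix (Fin n) (Fin n) ℝ} (hP : P.PosSemidef)
    (hdet : 0 < P.det) : Real.log P.det ≤ P.trace - n := by
  classical
  have hprod : P.det = ∏ i, hP.1.eigenvalues i := by
    have := hP.1.det_eq_prod_eigenvalues
    simpa using this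
  have hpos : ∀ i, 0 < hP.1.eigenvalues i := by
    intro i
    rcases lt_or_eq_of_le (hP.eigenvalues_nonneg i) with h | h
    · exact h
    · exfalso
      have : P.det = 0 := by
        rw [hprod]
        exact Finset.prod_eq_zero (Finset.mem_univ i) h.symm
      exact absurd this (ne_of_gt hdet)
  rw [hprod, Real.log_prod (fun i _ => ne_of_gt (hpos i)),
    trace_eq_sum_eigenvalues hP.1]
  have : ∀ i : Fin n, Real.log (hP.1.eigenvalues i) ≤ hP.1.eigenvalues i - 1 :=
    fun i => Real.log_le_sub_one_of_pos (hpos i)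
  calc ∑ i, Real.log (hP.1.eigenvalues i) ≤ ∑ i, (hP.1.eigenvalues i - 1) :=
        Finset.sum_le_sum fun i _ => this i
    _ = (∑ i, hP.1.eigenvalues i) - n := by
        rw [Finset.sum_sub_distrib]
        simp

/-- Claim A : log det A - log det B ≤ tr (B⁻¹ (A - B)). -/
lemma logdet_sub_le {A B : Matrix (Fin n) (Fin n) ℝ} (hA : A.PosDef) (hB : B.PosDef) :
    Real.log A.det - Real.log B.det ≤ (B⁻¹ * (A - B)).trace := by
  classical
  have hBi : (B⁻¹).PosDef := hB.inv
  set R : Matrix (Fin n) (Fin n) ℝ := CFC.sqrt B⁻¹ with hRdef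
  have hR : R.PosSemidef := Matrix.nonneg_iff_posSemidef.mp (CFC.sqrt_nonneg _)
  have hRR : R * R = B⁻¹ := CFC.sqrt_mul_sqrt_self _ hBi.posSemidef.nonneg
  set P : Matrix (Fin n) (Fin n) ℝ := R * A * R with hPdef
  have hP : P.PosSemidef := by
    have h := hA.posSemidef.mul_mul_conjTranspose_same R
    rw [hR.1] at h
    exact h
  have hdetB : IsUnit B.det := isUnit_iff_ne_zero.mpr (ne_of_gt hB.det_pos)
  have hdetP : P.det = A.det * (B.det)⁻¹ := by
    have h1 : R.det * R.det = (B.det)⁻¹ := by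
      rw [← Matrix.det_mul, hRR, Matrix.det_nonsing_inv, Ring.inverse_eq_inv']
    rw [hPdef, Matrix.det_mul, Matrix.det_mul, mul_right_comm, h1, mul_comm]
  have hdetPpos : 0 < P.det := by
    rw [hdetP]; exact mul_pos hA.det_pos (inv_pos.mpr hB.det_pos)
  have htr : P.trace = (B⁻¹ * A).trace := by
    rw [hPdef, Matrix.trace_mul_cycle, hRR]
  have hlog : Real.log P.det = Real.log A.det - Real.log B.det := by
    rw [hdetP, Real.log_mul (ne_of_gt hA.det_pos) (inv_ne_zero (ne_of_gt hB.det_pos)),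
      Real.log_inv]
    ring
  have h := log_det_le_trace_sub hP hdetPpos
  rw [hlog, htr] at h
  have hfinal : (B⁻¹ * A).trace - n = (B⁻¹ * (A - B)).trace := by
    rw [Matrix.mul_sub, Matrix.trace_sub, Matrix.nonsing_inv_mul B hdetB, Matrix.trace_one]
    simp
  linarith [h, hfinal.le, hfinal.ge]

end KLaux

/-- Lipschitz bound, with a constant depending only on `m` and `M` (not on
`n`), for the scaled Kullback–Leibler functional
`d(Σ) = (1/n) log det(Σ K⁻¹) + (1/n) tr(K Σ⁻¹) − 1` in the matrix `Σ`, over symmetric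
positive definite matrices with eigenvalues in `[m, M]`. -/
theorem kl_functional_lipschitz (m M : ℝ) (hm : 0 < m) (hmM : m ≤ M) :
    ∃ C : ℝ, ∀ (n : ℕ) (S St K : Matrix (Fin n) (Fin n) ℝ)
      (hS : S.PosDef) (hSt : St.PosDef) (hK : K.PosDef),
      (∀ i, m ≤ hS.1.eigenvalues i) → (∀ i, m ≤ hSt.1.eigenvalues i) →
      (∀ i, m ≤ hK.1.eigenvalues i) →
      specNorm S ≤ M → specNorm St ≤ M → specNorm K ≤ M →
      |((1/(n:ℝ)) * Real.log (S * K⁻¹).det + (1/(n:ℝ)) * (K * S⁻¹).trace - 1) -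
        ((1/(n:ℝ)) * Real.log (St * K⁻¹).det + (1/(n:ℝ)) * (K * St⁻¹).trace - 1)| ≤
        C * specNorm (S - St) := by
  classical
  have hM : 0 < M := lt_of_lt_of_le hm hmM
  refine ⟨1/m + M/m^2, ?_⟩
  intro n S St K hS hSt hK hmS hmSt hmK hMS hMSt hMK
  have hC : (0:ℝ) ≤ 1/m + M/m^2 := by positivity
  rcases Nat.eq_zero_or_pos n with hn | hn
  · subst hn
    rw [KLaux.specNorm_eq]
    have h0 : ((1/((0:ℕ):ℝ)) * Real.log (S * K⁻¹).det + (1/((0:ℕ):ℝ)) * (K * S⁻¹).trace - 1) -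
        ((1/((0:ℕ):ℝ)) * Real.log (St * K⁻¹).det + (1/((0:ℕ):ℝ)) * (K * St⁻¹).trace - 1) = 0 := by
      norm_num
    rw [h0, abs_zero]
    exact mul_nonneg hC (norm_nonneg _)
  · have hnR : (0:ℝ) < (n:ℝ) := by exact_mod_cast hn
    have hdetKi : 0 < (K⁻¹).det := hK.inv.det_pos
    -- split the log determinants
    have hlogS : Real.log (S * K⁻¹).det = Real.log S.det + Real.log (K⁻¹).det := by
      rw [Matrix.det_mul, Real.log_mul (ne_of_gt hS.det_pos) (ne_of_gt hdetKi)]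
    have hlogSt : Real.log (St * K⁻¹).det = Real.log St.det + Real.log (K⁻¹).det := by
      rw [Matrix.det_mul, Real.log_mul (ne_of_gt hSt.det_pos) (ne_of_gt hdetKi)]
    -- inverse norm bounds
    have hSinv : ‖S⁻¹‖ ≤ 1/m := KLaux.inv_norm_le hS hm (KLaux.quad_lower hS hmS)
    have hStinv : ‖St⁻¹‖ ≤ 1/m := KLaux.inv_norm_le hSt hm (KLaux.quad_lower hSt hmSt)
    have hKnorm : ‖K‖ ≤ M := hMK
    have hStnorm : ‖St⁻¹‖ ≤ 1/m := hStinv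
    -- the trace difference
    have hSS : S⁻¹ * S = 1 :=
      Matrix.nonsing_inv_mul S (isUnit_iff_ne_zero.mpr (ne_of_gt hS.det_pos))
    have hStSt : St * St⁻¹ = 1 :=
      Matrix.mul_nonsing_inv St (isUnit_iff_ne_zero.mpr (ne_of_gt hSt.det_pos))
    have key : K * S⁻¹ * (St - S) * St⁻¹ = K * S⁻¹ - K * St⁻¹ := by
      rw [Matrix.mul_sub, Matrix.sub_mul]
      congr 1
      · rw [Matrix.mul_assoc (K * S⁻¹), hStSt, Matrix.mul_one]
      · rw [Matrix.mul_assoc K S⁻¹ S, hSS, Matrix.mul_one]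
    have htracebound : |(K * S⁻¹).trace - (K * St⁻¹).trace|
        ≤ (n:ℝ) * (M * (1/m) * ‖S - St‖ * (1/m)) := by
      have h0 : (K * S⁻¹).trace - (K * St⁻¹).trace = (K * S⁻¹ * (St - S) * St⁻¹).trace := by
        rw [key, Matrix.trace_sub]
      rw [h0]
      refine (KLaux.abs_trace_le _).trans ?_
      have hnorm4 : ‖K * S⁻¹ * (St - S) * St⁻¹‖ ≤ M * (1/m) * ‖S - St‖ * (1/m) := by
        have e1 : ‖St - S‖ = ‖S - St‖ := norm_sub_rev _ _
        calc ‖K * S⁻¹ * (St - S) * St⁻¹‖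
            ≤ ‖K * S⁻¹ * (St - S)‖ * ‖St⁻¹‖ := norm_mul_le _ _
          _ ≤ (‖K * S⁻¹‖ * ‖St - S‖) * ‖St⁻¹‖ := by
              have := norm_mul_le (K * S⁻¹) (St - S)
              exact mul_le_mul_of_nonneg_right this (norm_nonneg _)
          _ ≤ ((‖K‖ * ‖S⁻¹‖) * ‖St - S‖) * ‖St⁻¹‖ := by
              have := norm_mul_le K S⁻¹
              have h2 := mul_le_mul_of_nonneg_right this (norm_nonneg (St - S))
              exact mul_le_mul_of_nonneg_right h2 (norm_nonneg _)
          _ ≤ M * (1/m) * ‖S - St‖ * (1/m) := by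
              rw [e1]
              have hm' : (0:ℝ) ≤ 1/m := by positivity
              have h1 : ‖K‖ * ‖S⁻¹‖ ≤ M * (1/m) :=
                mul_le_mul hKnorm hSinv (norm_nonneg _) (le_of_lt hM)
              have h2 : (‖K‖ * ‖S⁻¹‖) * ‖S - St‖ ≤ (M * (1/m)) * ‖S - St‖ :=
                mul_le_mul_of_nonneg_right h1 (norm_nonneg _)
              exact mul_le_mul h2 hStnorm (norm_nonneg _) (by positivity)
      exact mul_le_mul_of_nonneg_left hnorm4 (le_of_lt hnR)
    -- the log det difference
    have hlogbound : |Real.log S.det - Real.log St.det| ≤ (n:ℝ) * ((1/m) * ‖S - St‖) := by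
      rw [abs_sub_le_iff]
      constructor
      · refine (KLaux.logdet_sub_le hS hSt).trans ?_
        refine (le_abs_self _).trans ((KLaux.abs_trace_le _).trans ?_)
        have : ‖St⁻¹ * (S - St)‖ ≤ (1/m) * ‖S - St‖ := by
          refine (norm_mul_le _ _).trans ?_
          exact mul_le_mul_of_nonneg_right hStinv (norm_nonneg _)
        exact mul_le_mul_of_nonneg_left this (le_of_lt hnR)
      · refine (KLaux.logdet_sub_le hSt hS).trans ?_
        refine (le_abs_self _).trans ((KLaux.abs_trace_le _).trans ?_)
        have : ‖S⁻¹ * (St - S)‖ ≤ (1/m) * ‖S - St‖ := by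
          refine (norm_mul_le _ _).trans ?_
          rw [norm_sub_rev]
          exact mul_le_mul_of_nonneg_right hSinv (norm_nonneg _)
        exact mul_le_mul_of_nonneg_left this (le_of_lt hnR)
    -- assemble
    rw [KLaux.specNorm_eq]
    have hsplit : ((1/(n:ℝ)) * Real.log (S * K⁻¹).det + (1/(n:ℝ)) * (K * S⁻¹).trace - 1) -
        ((1/(n:ℝ)) * Real.log (St * K⁻¹).det + (1/(n:ℝ)) * (K * St⁻¹).trace - 1)
        = (1/(n:ℝ)) * (Real.log S.det - Real.log St.det)
          + (1/(n:ℝ)) * ((K * S⁻¹).trace - (K * St⁻¹).trace) := by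
      rw [hlogS, hlogSt]; ring
    rw [hsplit]
    have hinv : (0:ℝ) ≤ 1/(n:ℝ) := by positivity
    calc |(1/(n:ℝ)) * (Real.log S.det - Real.log St.det)
          + (1/(n:ℝ)) * ((K * S⁻¹).trace - (K * St⁻¹).trace)|
        ≤ |(1/(n:ℝ)) * (Real.log S.det - Real.log St.det)|
          + |(1/(n:ℝ)) * ((K * S⁻¹).trace - (K * St⁻¹).trace)| := abs_add_le _ _
      _ = (1/(n:ℝ)) * |Real.log S.det - Real.log St.det|
          + (1/(n:ℝ)) * |(K * S⁻¹).trace - (K * St⁻¹).trace| := by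
            rw [abs_mul, abs_mul, abs_of_nonneg hinv]
      _ ≤ (1/(n:ℝ)) * ((n:ℝ) * ((1/m) * ‖S - St‖))
          + (1/(n:ℝ)) * ((n:ℝ) * (M * (1/m) * ‖S - St‖ * (1/m))) := by
            refine add_le_add (mul_le_mul_of_nonneg_left hlogbound hinv)
              (mul_le_mul_of_nonneg_left htracebound hinv)
      _ = (1/m + M/m^2) * ‖S - St‖ := by
            field_simp
end
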